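/- Let A ⊆ V_A and B ⊆ V_B be almost compact cones in finite-dimensional real vector spaces. Then the extreme rays of A ⊗ B are precisely the rays ℝ₊·(a ⊗ b) where ℝ₊·a is an extreme ray of A and ℝ₊·b is an extreme ray of B: every such ray ℝ₊·(a ⊗ b) is an extreme ray of A ⊗ B, and every extreme ray of A ⊗ B has this form. -/

import Mathlib

open scoped TensorProduct

/-- A convex cone `C` in a finite-dimensional real vector space is an *almost compact cone*
if it is a convex cone that is closed, pointed (`C ∩ (−C) = {0}`) and full-dimensional
(nonempty interior). -/
def IsACCone {V : Type*} [NormedAddCommGroup V] [NormedSpace ℝ V] (C : Set V) : Prop :=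
  (∀ x ∈ C, ∀ y ∈ C, x + y ∈ C) ∧
  (∀ c : ℝ, 0 ≤ c → ∀ x ∈ C, c • x ∈ C) ∧
  IsClosed C ∧
  C ∩ (-C) = {0} ∧
  (interior C).Nonempty

/-- `F` is a face of the convex cone `C`: a subcone of `C` such that whenever
`x + y ∈ F` with `x, y ∈ C` one has `x, y ∈ F`. -/
def IsConeFace {V : Type*} [AddCommGroup V] [Module ℝ V] (C F : Set V) : Prop :=
  F ⊆ C ∧ (∀ x ∈ F, ∀ y ∈ F, x + y ∈ F) ∧ (∀ c : ℝ, 0 ≤ c → ∀ x ∈ F, c • x ∈ F) ∧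
  (∀ x ∈ C, ∀ y ∈ C, x + y ∈ F → x ∈ F ∧ y ∈ F)

/-- The ray `ℝ₊·x` spanned by `x`. -/
def rayOf {V : Type*} [AddCommGroup V] [Module ℝ V] (x : V) : Set V :=
  {y | ∃ c : ℝ, 0 ≤ c ∧ y = c • x}

/-- `ℝ₊·x` is an extreme ray of the convex cone `C`: `x` is a nonzero element of `C` whose
ray is a face of `C`. -/
def IsExtremeRayOf {V : Type*} [AddCommGroup V] [Module ℝ V] (C : Set V) (x : V) : Prop :=
  x ≠ 0 ∧ x ∈ C ∧ IsConeFace C (rayOf x)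

/-- The tensor product cone `C₁ ⊗ C₂ ⊆ V₁ ⊗ V₂`: all finite sums `∑ᵢ cᵢ ⊗ dᵢ` with
`cᵢ ∈ C₁` and `dᵢ ∈ C₂`. -/
def tensorCone {V₁ V₂ : Type*} [AddCommGroup V₁] [Module ℝ V₁] [AddCommGroup V₂] [Module ℝ V₂]
    (C₁ : Set V₁) (C₂ : Set V₂) : Set (V₁ ⊗[ℝ] V₂) :=
  {z | ∃ (k : ℕ) (a : Fin k → V₁) (b : Fin k → V₂),
    (∀ j, a j ∈ C₁) ∧ (∀ j, b j ∈ C₂) ∧ z = ∑ j, a j ⊗ₜ[ℝ] b j}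

/-! ### Auxiliary lemmas -/

lemma exists_pos_functional {V : Type*} [NormedAddCommGroup V] [NormedSpace ℝ V]
    [FiniteDimensional ℝ V] {C : Set V}
    (hadd : ∀ x ∈ C, ∀ y ∈ C, x + y ∈ C)
    (hsmul : ∀ c : ℝ, 0 ≤ c → ∀ x ∈ C, c • x ∈ C)
    (hcl : IsClosed C) (hne : C.Nonempty) (hpt : C ∩ (-C) = {0}) :
    ∃ φ : V →L[ℝ] ℝ, (∀ x ∈ C, 0 ≤ φ x) ∧ (∀ x ∈ C, x ≠ 0 → 0 < φ x) := by
  obtain ⟨x₀, hx₀⟩ := hne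
  have h0 : (0 : V) ∈ C := by simpa using hsmul 0 le_rfl x₀ hx₀
  have hconv : Convex ℝ C := by
    intro x hx y hy a b ha hb _
    exact hadd _ (hsmul a ha x hx) _ (hsmul b hb y hy)
  set S : Set V := C ∩ Metric.sphere 0 1 with hS
  have hScomp : IsCompact S := (isCompact_sphere (0:V) 1).inter_left hcl
  have key : ∀ x ∈ S, ∃ g : V →L[ℝ] ℝ, (∀ a ∈ C, 0 ≤ g a) ∧ 0 < g x := by
    intro x hx
    have hxC : x ∈ C := hx.1
    have hxn : ‖x‖ = 1 := by simpa using hx.2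
    have hnx : -x ∉ C := by
      intro hmem
      have : x ∈ C ∩ (-C) := ⟨hxC, by simpa using hmem⟩
      rw [hpt] at this
      simp only [Set.mem_singleton_iff] at this
      rw [this] at hxn; simp at hxn
    obtain ⟨f, u, hfu, hux⟩ := geometric_hahn_banach_closed_point hconv hcl hnx
    have hu0 : 0 < u := by simpa using hfu 0 h0
    have hfC : ∀ a ∈ C, f a ≤ 0 := by
      intro a ha
      by_contra h
      push_neg at h
      have hc : (0:ℝ) ≤ (u+1)/ f a := le_of_lt (div_pos (by linarith) h)
      have h1 := hfu _ (hsmul _ hc a ha)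
      rw [map_smul, smul_eq_mul, div_mul_cancel₀ _ (ne_of_gt h)] at h1
      linarith
    refine ⟨-f, fun a ha => by simpa using hfC a ha, ?_⟩
    have h2 : u < -f x := by simpa [map_neg] using hux
    simp only [ContinuousLinearMap.neg_apply]
    linarith
  choose g hg1 hg2 using key
  have hcover : S ⊆ ⋃ i : S, {y | 0 < g i.1 i.2 y} := by
    intro y hy
    exact Set.mem_iUnion.2 ⟨⟨y, hy⟩, hg2 y hy⟩
  obtain ⟨t, ht⟩ := hScomp.elim_finite_subcover (fun i : S => {y | 0 < g i.1 i.2 y})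
    (fun i => isOpen_lt continuous_const (g i.1 i.2).continuous) hcover
  refine ⟨∑ i ∈ t, g i.1 i.2, ?_, ?_⟩
  · intro x hx
    simp only [ContinuousLinearMap.coe_sum', Finset.sum_apply]
    exact Finset.sum_nonneg fun i _ => hg1 i.1 i.2 x hx
  · intro x hx hx0
    have hnorm : (0:ℝ) < ‖x‖ := norm_pos_iff.2 hx0
    have hy : ‖x‖⁻¹ • x ∈ S := by
      constructor
      · exact hsmul _ (inv_nonneg.2 hnorm.le) x hx
      · simp [norm_smul, abs_of_nonneg (inv_nonneg.2 hnorm.le), inv_mul_cancel₀ hnorm.ne']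
    obtain ⟨i, hi, hyi⟩ := Set.mem_iUnion₂.1 (ht hy)
    have hpos : 0 < (∑ i ∈ t, g i.1 i.2) (‖x‖⁻¹ • x) := by
      simp only [ContinuousLinearMap.coe_sum', Finset.sum_apply]
      exact Finset.sum_pos' (fun j _ => hg1 j.1 j.2 _ hy.1) ⟨i, hi, hyi⟩
    have hxeq : x = ‖x‖ • (‖x‖⁻¹ • x) := by
      rw [smul_smul, mul_inv_cancel₀ hnorm.ne', one_smul]
    calc (0:ℝ) < ‖x‖ * (∑ i ∈ t, g i.1 i.2) (‖x‖⁻¹ • x) := mul_pos hnorm hpos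
    _ = (∑ i ∈ t, g i.1 i.2) x := by rw [← smul_eq_mul, ← map_smul, ← hxeq]

lemma sum_mem_of_cone {V : Type*} [AddCommGroup V] [Module ℝ V] {C : Set V}
    (hadd : ∀ x ∈ C, ∀ y ∈ C, x + y ∈ C) (h0 : (0:V) ∈ C)
    {ι : Type*} (s : Finset ι) (w : ι → V) (hw : ∀ i ∈ s, w i ∈ C) :
    ∑ i ∈ s, w i ∈ C :=
  Finset.sum_induction w (· ∈ C) (fun a b ha hb => hadd a ha b hb) h0 hw

lemma mem_face_of_sum_mem {V : Type*} [AddCommGroup V] [Module ℝ V] {C F : Set V}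
    (hF : IsConeFace C F)
    (hadd : ∀ x ∈ C, ∀ y ∈ C, x + y ∈ C) (h0 : (0:V) ∈ C)
    {ι : Type*} [Fintype ι] [DecidableEq ι] (w : ι → V) (hw : ∀ i, w i ∈ C)
    (hsum : ∑ i, w i ∈ F) (j : ι) : w j ∈ F := by
  have hrest : ∑ i ∈ Finset.univ.erase j, w i ∈ C :=
    sum_mem_of_cone hadd h0 _ w (fun i _ => hw i)
  have heq : w j + ∑ i ∈ Finset.univ.erase j, w i ∈ F := by
    rw [Finset.add_sum_erase _ _ (Finset.mem_univ j)]; exact hsum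
  exact (hF.2.2.2 _ (hw j) _ hrest heq).1

lemma zero_mem_tensorCone {V₁ V₂ : Type*} [AddCommGroup V₁] [Module ℝ V₁] [AddCommGroup V₂]
    [Module ℝ V₂] (C₁ : Set V₁) (C₂ : Set V₂) : (0 : V₁ ⊗[ℝ] V₂) ∈ tensorCone C₁ C₂ :=
  ⟨0, Fin.elim0, Fin.elim0, fun j => j.elim0, fun j => j.elim0, by simp⟩

lemma tmul_mem_tensorCone {V₁ V₂ : Type*} [AddCommGroup V₁] [Module ℝ V₁] [AddCommGroup V₂]
    [Module ℝ V₂] {C₁ : Set V₁} {C₂ : Set V₂} {a : V₁} {b : V₂} (ha : a ∈ C₁) (hb : b ∈ C₂) :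
    a ⊗ₜ[ℝ] b ∈ tensorCone C₁ C₂ :=
  ⟨1, fun _ => a, fun _ => b, fun _ => ha, fun _ => hb, by simp⟩

lemma add_mem_tensorCone {V₁ V₂ : Type*} [AddCommGroup V₁] [Module ℝ V₁] [AddCommGroup V₂]
    [Module ℝ V₂] {C₁ : Set V₁} {C₂ : Set V₂} {x y : V₁ ⊗[ℝ] V₂}
    (hx : x ∈ tensorCone C₁ C₂) (hy : y ∈ tensorCone C₁ C₂) : x + y ∈ tensorCone C₁ C₂ := by
  obtain ⟨k, a, b, ha, hb, rfl⟩ := hx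
  obtain ⟨m, a', b', ha', hb', rfl⟩ := hy
  refine ⟨k + m, Fin.append a a', Fin.append b b', ?_, ?_, ?_⟩
  · intro j
    refine Fin.addCases (fun i => ?_) (fun i => ?_) j
    · rw [Fin.append_left]; exact ha i
    · rw [Fin.append_right]; exact ha' i
  · intro j
    refine Fin.addCases (fun i => ?_) (fun i => ?_) j
    · rw [Fin.append_left]; exact hb i
    · rw [Fin.append_right]; exact hb' i
  · rw [Fin.sum_univ_add]
    simp [Fin.append_left, Fin.append_right]

/-- Contraction on the left: `x ⊗ y ↦ f x • y`. -/
noncomputable def ctrL {V₁ V₂ : Type*} [AddCommGroup V₁] [Module ℝ V₁] [AddCommGroup V₂]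
    [Module ℝ V₂] (f : V₁ →ₗ[ℝ] ℝ) : V₁ ⊗[ℝ] V₂ →ₗ[ℝ] V₂ :=
  TensorProduct.lift ((LinearMap.lsmul ℝ V₂).comp f)

/-- Contraction on the right: `x ⊗ y ↦ g y • x`. -/
noncomputable def ctrR {V₁ V₂ : Type*} [AddCommGroup V₁] [Module ℝ V₁] [AddCommGroup V₂]
    [Module ℝ V₂] (g : V₂ →ₗ[ℝ] ℝ) : V₁ ⊗[ℝ] V₂ →ₗ[ℝ] V₁ :=
  TensorProduct.lift (((LinearMap.lsmul ℝ V₁).comp g).flip)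

@[simp] lemma ctrL_tmul {V₁ V₂ : Type*} [AddCommGroup V₁] [Module ℝ V₁] [AddCommGroup V₂]
    [Module ℝ V₂] (f : V₁ →ₗ[ℝ] ℝ) (x : V₁) (y : V₂) : ctrL f (x ⊗ₜ[ℝ] y) = f x • y := by
  simp [ctrL]

@[simp] lemma ctrR_tmul {V₁ V₂ : Type*} [AddCommGroup V₁] [Module ℝ V₁] [AddCommGroup V₂]
    [Module ℝ V₂] (g : V₂ →ₗ[ℝ] ℝ) (x : V₁) (y : V₂) : ctrR g (x ⊗ₜ[ℝ] y) = g y • x := by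
  simp [ctrR]

lemma exists_dual_one {V : Type*} [NormedAddCommGroup V] [NormedSpace ℝ V] {x : V}
    (hx : x ≠ 0) : ∃ f : V →L[ℝ] ℝ, f x = 1 := by
  obtain ⟨g, _, hg⟩ := exists_dual_vector ℝ x (norm_ne_zero_iff.2 hx)
  exact ⟨‖x‖⁻¹ • g, by simp [hg, inv_mul_cancel₀ (norm_ne_zero_iff.2 hx)]⟩

lemma tmul_left_cancel {V₁ V₂ : Type*} [NormedAddCommGroup V₁] [NormedSpace ℝ V₁]
    [NormedAddCommGroup V₂] [NormedSpace ℝ V₂] {a a' : V₁} {b : V₂} (hb : b ≠ 0)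
    (h : a ⊗ₜ[ℝ] b = a' ⊗ₜ[ℝ] b) : a = a' := by
  obtain ⟨g, hg⟩ := exists_dual_one hb
  have := congrArg (ctrR (g : V₂ →ₗ[ℝ] ℝ)) h
  simpa [hg] using this

lemma tmul_right_cancel {V₁ V₂ : Type*} [NormedAddCommGroup V₁] [NormedSpace ℝ V₁]
    [NormedAddCommGroup V₂] [NormedSpace ℝ V₂] {a : V₁} {b b' : V₂} (ha : a ≠ 0)
    (h : a ⊗ₜ[ℝ] b = a ⊗ₜ[ℝ] b') : b = b' := by
  obtain ⟨f, hf⟩ := exists_dual_one ha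
  have := congrArg (ctrL (f : V₁ →ₗ[ℝ] ℝ)) h
  simpa [hf] using this

lemma tmul_ne_zero {V₁ V₂ : Type*} [NormedAddCommGroup V₁] [NormedSpace ℝ V₁]
    [NormedAddCommGroup V₂] [NormedSpace ℝ V₂] {a : V₁} {b : V₂} (ha : a ≠ 0) (hb : b ≠ 0) :
    a ⊗ₜ[ℝ] b ≠ 0 := by
  obtain ⟨f, hf⟩ := exists_dual_one ha
  intro h
  have := congrArg (ctrL (f : V₁ →ₗ[ℝ] ℝ)) h
  rw [ctrL_tmul, map_zero] at this
  rw [show ((f : V₁ →ₗ[ℝ] ℝ) a) = 1 from hf, one_smul] at this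
  exact hb this

lemma rayOf_isConeFace {V : Type*} [AddCommGroup V] [Module ℝ V] {C : Set V}
    (hsmul : ∀ c : ℝ, 0 ≤ c → ∀ x ∈ C, c • x ∈ C) {a : V} (ha : a ∈ C)
    (hface : ∀ x ∈ C, ∀ y ∈ C, x + y ∈ rayOf a → x ∈ rayOf a ∧ y ∈ rayOf a) :
    IsConeFace C (rayOf a) := by
  refine ⟨?_, ?_, ?_, hface⟩
  · rintro y ⟨c, hc, rfl⟩; exact hsmul c hc a ha
  · rintro x ⟨c, hc, rfl⟩ y ⟨d, hd, rfl⟩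
    exact ⟨c + d, by linarith, (add_smul c d a).symm⟩
  · rintro c hc x ⟨d, hd, rfl⟩
    exact ⟨c * d, mul_nonneg hc hd, (mul_smul c d a).symm⟩

lemma smul_mem_tensorCone {V₁ V₂ : Type*} [AddCommGroup V₁] [Module ℝ V₁] [AddCommGroup V₂]
    [Module ℝ V₂] {C₁ : Set V₁} {C₂ : Set V₂}
    (hsmul : ∀ c : ℝ, 0 ≤ c → ∀ x ∈ C₁, c • x ∈ C₁)
    {c : ℝ} (hc : 0 ≤ c) {x : V₁ ⊗[ℝ] V₂} (hx : x ∈ tensorCone C₁ C₂) :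
    c • x ∈ tensorCone C₁ C₂ := by
  obtain ⟨k, a, b, ha, hb, rfl⟩ := hx
  refine ⟨k, fun j => c • a j, b, fun j => hsmul c hc _ (ha j), hb, ?_⟩
  rw [Finset.smul_sum]
  exact Finset.sum_congr rfl fun j _ => TensorProduct.smul_tmul' c (a j) (b j)

/-- The extreme rays of `A ⊗ B` are precisely the tensor products of extreme rays of `A`
and extreme rays of `B`. -/
theorem extreme_rays_of_tensor_cone {VA VB : Type*}
    [NormedAddCommGroup VA] [NormedSpace ℝ VA] [FiniteDimensional ℝ VA]
    [NormedAddCommGroup VB] [NormedSpace ℝ VB] [FiniteDimensional ℝ VB]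
    (A : Set VA) (B : Set VB) (hA : IsACCone A) (hB : IsACCone B) :
    (∀ (a : VA) (b : VB), IsExtremeRayOf A a → IsExtremeRayOf B b →
      IsExtremeRayOf (tensorCone A B) (a ⊗ₜ[ℝ] b)) ∧
    (∀ z : VA ⊗[ℝ] VB, IsExtremeRayOf (tensorCone A B) z →
      ∃ (a : VA) (b : VB), IsExtremeRayOf A a ∧ IsExtremeRayOf B b ∧ z = a ⊗ₜ[ℝ] b) := by
  obtain ⟨hAadd, hAsmul, hAcl, hApt, hAint⟩ := hA
  obtain ⟨hBadd, hBsmul, hBcl, hBpt, hBint⟩ := hB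
  obtain ⟨φ, hφ0, hφpos⟩ := exists_pos_functional hAadd hAsmul hAcl
    (hAint.mono interior_subset) hApt
  obtain ⟨ψ, hψ0, hψpos⟩ := exists_pos_functional hBadd hBsmul hBcl
    (hBint.mono interior_subset) hBpt
  have h0A : (0 : VA) ∈ A := by
    obtain ⟨x₀, hx₀⟩ := hAint.mono interior_subset
    simpa using hAsmul 0 le_rfl x₀ hx₀
  have h0B : (0 : VB) ∈ B := by
    obtain ⟨x₀, hx₀⟩ := hBint.mono interior_subset
    simpa using hBsmul 0 le_rfl x₀ hx₀
  -- key decomposition lemma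
  have key : ∀ (a : VA) (b : VB), IsExtremeRayOf A a → IsExtremeRayOf B b →
      ∀ {n : ℕ} (u : Fin n → VA) (v : Fin n → VB), (∀ j, u j ∈ A) → (∀ j, v j ∈ B) →
      ∀ c : ℝ, 0 ≤ c → ∑ j, u j ⊗ₜ[ℝ] v j = c • (a ⊗ₜ[ℝ] b) →
      ∀ j, ∃ r : ℝ, 0 ≤ r ∧ u j ⊗ₜ[ℝ] v j = r • (a ⊗ₜ[ℝ] b) := by
    intro a b ha hb n u v hu hv c hc hsum j
    have h1 : ∑ i, φ (u i) • v i = (c * φ a) • b := by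
      have := congrArg (ctrL (φ : VA →ₗ[ℝ] ℝ)) hsum
      simpa [map_sum, smul_smul] using this
    have h2 : ∑ i, ψ (v i) • u i = (c * ψ b) • a := by
      have := congrArg (ctrR (ψ : VB →ₗ[ℝ] ℝ)) hsum
      simpa [map_sum, smul_smul, mul_comm] using this
    have hvray : ∀ i, φ (u i) • v i ∈ rayOf b := by
      intro i
      refine mem_face_of_sum_mem hb.2.2 hBadd h0B _
        (fun i => hBsmul _ (hφ0 _ (hu i)) _ (hv i))
        ⟨c * φ a, mul_nonneg hc (hφ0 a ha.2.1), h1⟩ i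
    have huray : ∀ i, ψ (v i) • u i ∈ rayOf a := by
      intro i
      refine mem_face_of_sum_mem ha.2.2 hAadd h0A _
        (fun i => hAsmul _ (hψ0 _ (hv i)) _ (hu i))
        ⟨c * ψ b, mul_nonneg hc (hψ0 b hb.2.1), h2⟩ i
    by_cases hu0 : u j = 0
    · exact ⟨0, le_rfl, by simp [hu0]⟩
    by_cases hv0 : v j = 0
    · exact ⟨0, le_rfl, by simp [hv0]⟩
    obtain ⟨s, hs, hsv⟩ := hvray j
    obtain ⟨t, ht, htu⟩ := huray j
    have hφu : 0 < φ (u j) := hφpos _ (hu j) hu0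
    have hψv : 0 < ψ (v j) := hψpos _ (hv j) hv0
    have hveq : v j = (s / φ (u j)) • b := by
      rw [← inv_smul_smul₀ hφu.ne' (v j), hsv, smul_smul, div_eq_inv_mul]
    have hueq : u j = (t / ψ (v j)) • a := by
      rw [← inv_smul_smul₀ hψv.ne' (u j), htu, smul_smul, div_eq_inv_mul]
    refine ⟨(t / ψ (v j)) * (s / φ (u j)),
      mul_nonneg (div_nonneg ht hψv.le) (div_nonneg hs hφu.le), ?_⟩
    rw [← TensorProduct.smul_tmul_smul, ← hueq, ← hveq]
  constructor
  · -- forward direction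
    intro a b ha hb
    have hmem : a ⊗ₜ[ℝ] b ∈ tensorCone A B := tmul_mem_tensorCone ha.2.1 hb.2.1
    refine ⟨tmul_ne_zero ha.1 hb.1, hmem, ?_⟩
    refine rayOf_isConeFace (fun c hc x hx => smul_mem_tensorCone hAsmul hc hx) hmem ?_
    rintro x hx y hy ⟨c, hc, hcz⟩
    obtain ⟨k, u, v, hu, hv, rfl⟩ := hx
    obtain ⟨m, u', v', hu', hv', rfl⟩ := hy
    have hU : ∀ j, Fin.append u u' j ∈ A := by
      intro j
      refine Fin.addCases (fun i => ?_) (fun i => ?_) j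
      · rw [Fin.append_left]; exact hu i
      · rw [Fin.append_right]; exact hu' i
    have hV : ∀ j, Fin.append v v' j ∈ B := by
      intro j
      refine Fin.addCases (fun i => ?_) (fun i => ?_) j
      · rw [Fin.append_left]; exact hv i
      · rw [Fin.append_right]; exact hv' i
    have hsum : ∑ j : Fin (k + m), Fin.append u u' j ⊗ₜ[ℝ] Fin.append v v' j
        = c • (a ⊗ₜ[ℝ] b) := by
      rw [Fin.sum_univ_add]
      simpa [Fin.append_left, Fin.append_right] using hcz
    have hterms := key a b ha hb _ _ hU hV c hc hsum
    constructor
    · have hx' : ∀ j : Fin k, ∃ r : ℝ, 0 ≤ r ∧ u j ⊗ₜ[ℝ] v j = r • (a ⊗ₜ[ℝ] b) := by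
        intro j
        have := hterms (Fin.castAdd m j)
        simpa [Fin.append_left] using this
      choose r hr hre using hx'
      refine ⟨∑ j, r j, Finset.sum_nonneg fun j _ => hr j, ?_⟩
      rw [Finset.sum_smul]
      exact Finset.sum_congr rfl fun j _ => hre j
    · have hy' : ∀ j : Fin m, ∃ r : ℝ, 0 ≤ r ∧ u' j ⊗ₜ[ℝ] v' j = r • (a ⊗ₜ[ℝ] b) := by
        intro j
        have := hterms (Fin.natAdd k j)
        simpa [Fin.append_right] using this
      choose r hr hre using hy'
      refine ⟨∑ j, r j, Finset.sum_nonneg fun j _ => hr j, ?_⟩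
      rw [Finset.sum_smul]
      exact Finset.sum_congr rfl fun j _ => hre j
  · -- backward direction
    intro z hz
    obtain ⟨hz0, hzC, hzF⟩ := hz
    obtain ⟨k, u, v, hu, hv, hzeq⟩ := hzC
    have hterm : ∀ j : Fin k, u j ⊗ₜ[ℝ] v j ∈ rayOf z := by
      intro j
      refine mem_face_of_sum_mem hzF (fun x hx y hy => add_mem_tensorCone hx hy)
        (zero_mem_tensorCone A B) _ (fun i => tmul_mem_tensorCone (hu i) (hv i))
        ⟨1, zero_le_one, by rw [one_smul]; exact hzeq.symm⟩ j
    choose c hc hcz using hterm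
    have hsum1 : ∑ j, c j = 1 := by
      have hz1 : (1 - ∑ j, c j) • z = 0 := by
        rw [sub_smul, one_smul, Finset.sum_smul, sub_eq_zero]
        conv_lhs => rw [hzeq]
        exact Finset.sum_congr rfl fun j _ => hcz j
      rcases smul_eq_zero.1 hz1 with h | h
      · linarith [sub_eq_zero.1 h]
      · exact absurd h hz0
    obtain ⟨j, hj⟩ : ∃ j, 0 < c j := by
      by_contra hno
      push_neg at hno
      have : ∑ j, c j ≤ 0 := Finset.sum_nonpos fun j _ => hno j
      linarith
    set a : VA := (c j)⁻¹ • u j with hadef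
    set b : VB := v j with hbdef
    have hzab : z = a ⊗ₜ[ℝ] b := by
      rw [hadef, ← TensorProduct.smul_tmul', hcz j, inv_smul_smul₀ hj.ne']
    have ha0 : a ≠ 0 := by
      intro h; rw [hzab, h, TensorProduct.zero_tmul] at hz0; exact hz0 rfl
    have hb0 : b ≠ 0 := by
      intro h; rw [hzab, h, TensorProduct.tmul_zero] at hz0; exact hz0 rfl
    have haA : a ∈ A := hAsmul _ (inv_nonneg.2 hj.le) _ (hu j)
    have hbB : b ∈ B := hv j
    refine ⟨a, b, ⟨ha0, haA, ?_⟩, ⟨hb0, hbB, ?_⟩, hzab⟩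
    · refine rayOf_isConeFace hAsmul haA ?_
      rintro x hx y hy ⟨d, hd, hxy⟩
      have h1 : x ⊗ₜ[ℝ] b + y ⊗ₜ[ℝ] b = d • z := by
        rw [← TensorProduct.add_tmul, hxy, hzab, TensorProduct.smul_tmul']
      have hface := hzF.2.2.2 _ (tmul_mem_tensorCone hx hbB) _ (tmul_mem_tensorCone hy hbB)
        ⟨d, hd, h1⟩
      obtain ⟨e, he, hxe⟩ := hface.1
      obtain ⟨e', he', hye⟩ := hface.2
      constructor
      · refine ⟨e, he, tmul_left_cancel hb0 ?_⟩
        rw [hxe, hzab, TensorProduct.smul_tmul']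
      · refine ⟨e', he', tmul_left_cancel hb0 ?_⟩
        rw [hye, hzab, TensorProduct.smul_tmul']
    · refine rayOf_isConeFace hBsmul hbB ?_
      rintro x hx y hy ⟨d, hd, hxy⟩
      have h1 : a ⊗ₜ[ℝ] x + a ⊗ₜ[ℝ] y = d • z := by
        rw [← TensorProduct.tmul_add, hxy, hzab, TensorProduct.tmul_smul]
      have hface := hzF.2.2.2 _ (tmul_mem_tensorCone haA hx) _ (tmul_mem_tensorCone haA hy)
        ⟨d, hd, h1⟩
      obtain ⟨e, he, hxe⟩ := hface.1
      obtain ⟨e', he', hye⟩ := hface.2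
      constructor
      · refine ⟨e, he, tmul_right_cancel ha0 ?_⟩
        rw [hxe, hzab, TensorProduct.tmul_smul]
      · refine ⟨e', he', tmul_right_cancel ha0 ?_⟩
        rw [hye, hzab, TensorProduct.tmul_smul]
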